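/- Let W_l(t) follow scaled-orthogonal initialization and the gradient-descent updates described in the context, and suppose rank(Φ) ≤ r with m := d − 2r > 0. Then there exist orthogonal d×d real matrices U_1,…,U_L and V_1,…,V_L satisfying V_{l+1} = U_l for each l ∈ {1,…,L−1}, such that for every l ∈ {1,…,L} and every t ≥ 0 there is a 2r×2r real matrix W̃_l(t) with W_l(t) = U_l · diag(W̃_l(t), ρ_l(t)·I_m) · V_lᵀ, where diag(A, B) denotes the d×d block-diagonal matrix with top-left block A and bottom-right block B, and moreover W̃_l(0) = ε_l·I_{2r}. -/

import Mathlib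

open Matrix BigOperators Filter

noncomputable section

/-- Auxiliary: product of `k` consecutive matrices ending (on the right) at index `i`. -/
def chainAux {n : Type*} [Fintype n] [DecidableEq n]
    (W : ℕ → Matrix n n ℝ) (i : ℕ) : ℕ → Matrix n n ℝ
  | 0 => 1
  | (k+1) => W (i + k) * chainAux W i k

/-- `chain W i j = W j * W (j-1) * ⋯ * W i`; equals `1` when `j < i` (empty product). -/
def chain {n : Type*} [Fintype n] [DecidableEq n]
    (W : ℕ → Matrix n n ℝ) (i j : ℕ) : Matrix n n ℝ :=
  chainAux W i (j + 1 - i)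

/-- `blockDiag r m A B` is the `(2r+m)×(2r+m)` block-diagonal matrix `diag(A, B)`
with top-left block `A` (of size `2r×2r`) and bottom-right block `B` (of size `m×m`). -/
def blockDiag (r m : ℕ) (A : Matrix (Fin (2*r)) (Fin (2*r)) ℝ)
    (B : Matrix (Fin m) (Fin m) ℝ) : Matrix (Fin (2*r + m)) (Fin (2*r + m)) ℝ :=
  Matrix.reindex finSumFinEquiv finSumFinEquiv (Matrix.fromBlocks A 0 0 B)

/-- The `d×2r` matrix formed by the first `2r` columns of a `(2r+m)×(2r+m)` matrix. -/
def cols1 (r m : ℕ) (U : Matrix (Fin (2*r + m)) (Fin (2*r + m)) ℝ) :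
    Matrix (Fin (2*r + m)) (Fin (2*r)) ℝ :=
  fun i j => U i (Fin.castAdd m j)

/-- The `d×m` matrix formed by the last `m` columns of a `(2r+m)×(2r+m)` matrix. -/
def cols2 (r m : ℕ) (U : Matrix (Fin (2*r + m)) (Fin (2*r + m)) ℝ) :
    Matrix (Fin (2*r + m)) (Fin m) ℝ :=
  fun i j => U i (Fin.natAdd (2*r) j)

/-- Squared Frobenius norm: `‖A‖_F² = trace(AᵀA)`. -/
def frobSq {p q : Type*} [Fintype p] [Fintype q] (A : Matrix p q ℝ) : ℝ :=
  Matrix.trace (Aᵀ * A)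

/-- Frobenius norm: `‖A‖_F = √(trace(AᵀA))`. -/
def frobNorm {p q : Type*} [Fintype p] [Fintype q] (A : Matrix p q ℝ) : ℝ :=
  Real.sqrt (Matrix.trace (Aᵀ * A))

section AuxLemmas

variable {r m : ℕ}

lemma blockDiag_mul (A A' : Matrix (Fin (2*r)) (Fin (2*r)) ℝ) (B B' : Matrix (Fin m) (Fin m) ℝ) :
    blockDiag r m A B * blockDiag r m A' B' = blockDiag r m (A * A') (B * B') := by
  simp only [_root_.blockDiag, reindex_apply, submatrix_mul_equiv, fromBlocks_multiply]
  simp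

lemma blockDiag_one : blockDiag r m 1 1 = (1 : Matrix (Fin (2*r+m)) (Fin (2*r+m)) ℝ) := by
  simp [_root_.blockDiag, fromBlocks_one]

lemma blockDiag_transpose (A : Matrix (Fin (2*r)) (Fin (2*r)) ℝ) (B : Matrix (Fin m) (Fin m) ℝ) :
    (blockDiag r m A B)ᵀ = blockDiag r m Aᵀ Bᵀ := by
  simp [_root_.blockDiag, transpose_submatrix, fromBlocks_transpose]

lemma blockDiag_smul (c : ℝ) (A : Matrix (Fin (2*r)) (Fin (2*r)) ℝ) (B : Matrix (Fin m) (Fin m) ℝ) :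
    c • blockDiag r m A B = blockDiag r m (c • A) (c • B) := by
  simp only [_root_.blockDiag, reindex_apply]
  rw [show (c • (fromBlocks A 0 0 B).submatrix ⇑finSumFinEquiv.symm ⇑finSumFinEquiv.symm)
      = (c • fromBlocks A 0 0 B).submatrix ⇑finSumFinEquiv.symm ⇑finSumFinEquiv.symm by
    rw [submatrix_smul]; rfl]
  rw [fromBlocks_smul]
  simp

lemma blockDiag_sub (A A' : Matrix (Fin (2*r)) (Fin (2*r)) ℝ) (B B' : Matrix (Fin m) (Fin m) ℝ) :
    blockDiag r m A B - blockDiag r m A' B' = blockDiag r m (A - A') (B - B') := by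
  simp only [_root_.blockDiag, reindex_apply]
  rw [show ((fromBlocks A 0 0 B).submatrix ⇑finSumFinEquiv.symm ⇑finSumFinEquiv.symm
      - (fromBlocks A' 0 0 B').submatrix ⇑finSumFinEquiv.symm ⇑finSumFinEquiv.symm)
      = (fromBlocks A 0 0 B - fromBlocks A' 0 0 B').submatrix ⇑finSumFinEquiv.symm ⇑finSumFinEquiv.symm by
    rw [submatrix_sub]; rfl]
  have h : fromBlocks A 0 0 B - fromBlocks A' 0 0 B' = fromBlocks (A - A') 0 0 (B - B') := by
    ext (i|i) (j|j) <;> simp [fromBlocks]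
  rw [h]

lemma blockDiag_mul_smul (A B : Matrix (Fin (2*r)) (Fin (2*r)) ℝ) (p q : ℝ) :
    blockDiag r m A (p • 1) * blockDiag r m B (q • 1)
      = blockDiag r m (A * B) ((p * q) • 1) := by
  rw [blockDiag_mul]
  congr 1
  rw [smul_mul_assoc, one_mul, smul_smul]

lemma cols2_mul (X Y : Matrix (Fin (2*r+m)) (Fin (2*r+m)) ℝ) :
    cols2 r m (X * Y) = X * cols2 r m Y := by
  ext i j
  simp [cols2, Matrix.mul_apply]

lemma cols2_smul (c : ℝ) (X : Matrix (Fin (2*r+m)) (Fin (2*r+m)) ℝ) :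
    cols2 r m (c • X) = c • cols2 r m X := by
  ext i j
  simp [cols2]

lemma eq_blockDiag_of (X : Matrix (Fin (2*r+m)) (Fin (2*r+m)) ℝ)
    (h1 : ∀ (a : Fin (2*r+m)) (j : Fin m), X a (Fin.natAdd (2*r) j) = 0)
    (h2 : ∀ (i : Fin m) (b : Fin (2*r+m)), X (Fin.natAdd (2*r) i) b = 0) :
    ∃ A, X = blockDiag r m A 0 := by
  refine ⟨X.submatrix (Fin.castAdd m) (Fin.castAdd m), ?_⟩
  ext i j
  obtain ⟨i', rfl⟩ := finSumFinEquiv.surjective i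
  obtain ⟨j', rfl⟩ := finSumFinEquiv.surjective j
  simp only [_root_.blockDiag, reindex_apply, submatrix_apply, Equiv.symm_apply_apply]
  cases i' with
  | inl a =>
    cases j' with
    | inl b => simp [fromBlocks, finSumFinEquiv_apply_left]
    | inr b => simp [fromBlocks, finSumFinEquiv_apply_right, h1]
  | inr a =>
    cases j' with
    | inl b => simp [fromBlocks, finSumFinEquiv_apply_left, finSumFinEquiv_apply_right, h2]
    | inr b => simp [fromBlocks, finSumFinEquiv_apply_right, h2]

end AuxLemmas

section ChainLemmas

variable {n : Type*} [Fintype n] [DecidableEq n]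

lemma chain_empty (W : ℕ → Matrix n n ℝ) {i j : ℕ} (h : j + 1 ≤ i) : chain W i j = 1 := by
  unfold chain
  rw [Nat.sub_eq_zero_of_le h]
  rfl

lemma chain_succ (W : ℕ → Matrix n n ℝ) {i j : ℕ} (h : i ≤ j + 1) :
    chain W i (j+1) = W (j+1) * chain W i j := by
  unfold chain
  rw [show j + 1 + 1 - i = (j + 1 - i) + 1 by omega]
  show W (i + (j + 1 - i)) * chainAux W i (j + 1 - i) = _
  rw [show i + (j + 1 - i) = j + 1 by omega]

lemma glue {Y : Matrix n n ℝ} (hY : Yᵀ * Y = 1) (X D D' Z : Matrix n n ℝ) :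
    (X * D * Yᵀ) * (Y * D' * Z) = X * (D * D') * Z := by
  simp only [Matrix.mul_assoc]
  rw [← Matrix.mul_assoc Yᵀ Y (D' * Z), hY, Matrix.one_mul]

end ChainLemmas
lemma exists_V1 (r m : ℕ) (d : ℕ) (hd : d = 2*r + m)
    (Φ G : Matrix (Fin d) (Fin d) ℝ) (hΦ : Φ.rank ≤ r) (hG : G.rank ≤ r) :
    ∃ V : Matrix (Fin d) (Fin d) ℝ, Vᵀ * V = 1 ∧ V * Vᵀ = 1 ∧
      ∀ j : Fin m, Φ.mulVec (fun i => V i ⟨2*r + (j:ℕ), by omega⟩) = 0 ∧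
                   G.mulVec (fun i => V i ⟨2*r + (j:ℕ), by omega⟩) = 0 := by
  classical
  set E := EuclideanSpace ℝ (Fin d) with hE
  let e : E ≃ₗ[ℝ] (Fin d → ℝ) := WithLp.linearEquiv 2 ℝ (Fin d → ℝ)
  let f : E →ₗ[ℝ] (Fin d → ℝ) := Φ.mulVecLin ∘ₗ e.toLinearMap
  let g : E →ₗ[ℝ] (Fin d → ℝ) := G.mulVecLin ∘ₗ e.toLinearMap
  have hrangef : LinearMap.range f = LinearMap.range Φ.mulVecLin := by
    rw [LinearMap.range_comp, LinearEquiv.range, Submodule.map_top]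
  have hrangeg : LinearMap.range g = LinearMap.range G.mulVecLin := by
    rw [LinearMap.range_comp, LinearEquiv.range, Submodule.map_top]
  have hfinE : Module.finrank ℝ E = d := finrank_euclideanSpace_fin
  have hkerf : d ≤ Module.finrank ℝ (LinearMap.ker f) + r := by
    have h1 := LinearMap.finrank_range_add_finrank_ker f
    rw [hrangef, hfinE] at h1
    have : Module.finrank ℝ (LinearMap.range Φ.mulVecLin) ≤ r := hΦ
    omega
  have hkerg : d ≤ Module.finrank ℝ (LinearMap.ker g) + r := by
    have h1 := LinearMap.finrank_range_add_finrank_ker g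
    rw [hrangeg, hfinE] at h1
    have : Module.finrank ℝ (LinearMap.range G.mulVecLin) ≤ r := hG
    omega
  set K := LinearMap.ker f ⊓ LinearMap.ker g with hK
  have hKrank : m ≤ Module.finrank ℝ K := by
    have h1 := Submodule.finrank_sup_add_finrank_inf_eq (LinearMap.ker f) (LinearMap.ker g)
    have h2 : Module.finrank ℝ ↥(LinearMap.ker f ⊔ LinearMap.ker g) ≤ Module.finrank ℝ E :=
      Submodule.finrank_le _
    have h3 : Module.finrank ℝ K = Module.finrank ℝ ↥(LinearMap.ker f ⊓ LinearMap.ker g) := rfl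
    omega
  -- orthonormal family of size m inside K
  let O := stdOrthonormalBasis ℝ K
  let w : Fin m → E := fun i => (O (Fin.castLE hKrank i) : E)
  have hw : Orthonormal ℝ w := by
    rw [orthonormal_iff_ite]
    intro i j
    have := orthonormal_iff_ite.mp O.orthonormal (Fin.castLE hKrank i) (Fin.castLE hKrank j)
    rw [Submodule.coe_inner] at this
    simp only [w]
    rw [this]; simp [Fin.castLE_inj]
  -- extend to an orthonormal basis of E, prescribing the last m vectors
  let s : Set (Fin d) := {i | 2*r ≤ (i:ℕ)}
  let v : Fin d → E := fun i => if h : 2*r ≤ (i:ℕ) then w ⟨(i:ℕ) - 2*r, by omega⟩ else 0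
  have hvs : Orthonormal ℝ (s.restrict v) := by
    rw [orthonormal_iff_ite]
    rintro ⟨i, hi⟩ ⟨j, hj⟩
    have hi' : 2*r ≤ (i:ℕ) := hi
    have hj' : 2*r ≤ (j:ℕ) := hj
    show inner ℝ (v i) (v j) = _
    simp only [Set.restrict_apply, v, dif_pos hi', dif_pos hj']
    rw [orthonormal_iff_ite.mp hw]
    by_cases h : i = j
    · subst h; simp
    · have h2 : (⟨i, hi⟩ : s) ≠ ⟨j, hj⟩ := fun hc => h (congrArg Subtype.val hc)
      have h3 : (⟨(i:ℕ)-2*r, by omega⟩ : Fin m) ≠ ⟨(j:ℕ)-2*r, by omega⟩ := by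
        intro hc
        apply h
        have hc' : (i:ℕ)-2*r = (j:ℕ)-2*r := congrArg Fin.val hc
        exact Fin.ext (by omega)
      rw [if_neg h3, if_neg h2]
  obtain ⟨b, hb⟩ := Orthonormal.exists_orthonormalBasis_extension_of_card_eq
    (by rw [hfinE, Fintype.card_fin]) hvs
  refine ⟨Matrix.of (fun a j => b j a), ?_, ?_, ?_⟩
  · ext i j
    have hbij := orthonormal_iff_ite.mp b.orthonormal i j
    rw [PiLp.inner_apply] at hbij
    simp only [RCLike.inner_apply, conj_trivial] at hbij
    rw [Matrix.mul_apply, Matrix.one_apply]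
    simpa [mul_comm] using hbij
  · rw [mul_eq_one_comm]
    ext i j
    have hbij := orthonormal_iff_ite.mp b.orthonormal i j
    rw [PiLp.inner_apply] at hbij
    simp only [RCLike.inner_apply, conj_trivial] at hbij
    rw [Matrix.mul_apply, Matrix.one_apply]
    simpa [mul_comm] using hbij
  · intro j
    set idx : Fin d := ⟨2*r + (j:ℕ), by omega⟩ with hidxdef
    have hidx : idx ∈ s := by simp [s, idx]
    have hbidx : b idx = w j := by
      rw [hb idx hidx]
      simp only [v, idx]
      rw [dif_pos (by omega : 2*r ≤ 2*r + (j:ℕ))]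
      exact congrArg w (Fin.ext (by simp))
    have hcol : (fun i => (Matrix.of (fun a j => b j a)) i idx) = fun i => (w j) i := by
      funext a
      rw [show (Matrix.of (fun a j => b j a)) a idx = b idx a from rfl, hbidx]
    have hwK : w j ∈ K := Submodule.coe_mem _
    rw [hK, Submodule.mem_inf] at hwK
    constructor
    · have h0 : f (w j) = 0 := LinearMap.mem_ker.mp hwK.1
      rw [hcol]
      exact h0
    · have h0 : g (w j) = 0 := LinearMap.mem_ker.mp hwK.2
      rw [hcol]
      exact h0

lemma exists_V1' (r m : ℕ) (Φ G : Matrix (Fin (2*r+m)) (Fin (2*r+m)) ℝ)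
    (hΦ : Φ.rank ≤ r) (hG : G.rank ≤ r) :
    ∃ V : Matrix (Fin (2*r+m)) (Fin (2*r+m)) ℝ, Vᵀ * V = 1 ∧ V * Vᵀ = 1 ∧
      Φ * cols2 r m V = 0 ∧ G * cols2 r m V = 0 := by
  obtain ⟨V, h1, h2, h3⟩ := exists_V1 r m (2*r+m) rfl Φ G hΦ hG
  refine ⟨V, h1, h2, ?_, ?_⟩
  · ext a j
    have h := congrFun ((h3 j).1) a
    simpa [Matrix.mul_apply, cols2, Matrix.mulVec, dotProduct, Fin.natAdd] using h
  · ext a j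
    have h := congrFun ((h3 j).2) a
    simpa [Matrix.mul_apply, cols2, Matrix.mulVec, dotProduct, Fin.natAdd] using h

lemma cancel_left {n : Type*} [Fintype n] [DecidableEq n] {Y : Matrix n n ℝ}
    (hY : Yᵀ * Y = 1) (X : Matrix n n ℝ) : Yᵀ * (Y * X) = X := by
  rw [← Matrix.mul_assoc, hY, Matrix.one_mul]

lemma combine_smul_sub {n : Type*} [Fintype n] [DecidableEq n] (a b : ℝ)
    (X D D' Z : Matrix n n ℝ) :
    a • (X * D * Z) - b • (X * D' * Z) = X * (a • D - b • D') * Z := by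
  simp only [Matrix.mul_sub, Matrix.sub_mul, Matrix.mul_smul, Matrix.smul_mul]

/-- Theorem 1: invariant low-dimensional subspaces for deep matrix
factorization trained by gradient descent from scaled orthogonal initialization.
Here `d = 2*r + m` with `m > 0`, layers are indexed by `l ∈ {1,…,L}`, and `W t l`
denotes `W_l(t)`. -/
theorem statement0
    (r m : ℕ) (hm : 0 < m) (L : ℕ) (hL : 1 ≤ L)
    (Φ : Matrix (Fin (2*r + m)) (Fin (2*r + m)) ℝ) (hΦ : Φ.rank ≤ r)
    (ε : ℕ → ℝ) (hε : ∀ l, 1 ≤ l → l ≤ L → 0 < ε l)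
    (η lam : ℝ) (hη : 0 < η) (hlam : 0 ≤ lam)
    (W : ℕ → ℕ → Matrix (Fin (2*r + m)) (Fin (2*r + m)) ℝ)
    (hW0 : ∀ l, 1 ≤ l → l ≤ L →
      W 0 l * (W 0 l)ᵀ = (ε l)^2 • (1 : Matrix (Fin (2*r + m)) (Fin (2*r + m)) ℝ) ∧
      (W 0 l)ᵀ * W 0 l = (ε l)^2 • (1 : Matrix (Fin (2*r + m)) (Fin (2*r + m)) ℝ))
    (hWupd : ∀ t l, 1 ≤ l → l ≤ L →
      W (t+1) l = (1 - η * lam) • W t l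
        - η • ((chain (W t) (l+1) L)ᵀ * (chain (W t) 1 L - Φ) * (chain (W t) 1 (l-1))ᵀ))
    (ρ : ℕ → ℕ → ℝ)
    (hρ0 : ∀ l, ρ 0 l = ε l)
    (hρ : ∀ t l, ρ (t+1) l
      = ρ t l * (1 - η * lam - η * ∏ k ∈ (Finset.Icc 1 L).erase l, (ρ t k)^2)) :
    ∃ U V : ℕ → Matrix (Fin (2*r + m)) (Fin (2*r + m)) ℝ,
      (∀ l, 1 ≤ l → l ≤ L →
        ((U l)ᵀ * U l = 1 ∧ U l * (U l)ᵀ = 1) ∧ ((V l)ᵀ * V l = 1 ∧ V l * (V l)ᵀ = 1)) ∧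
      (∀ l, 1 ≤ l → l + 1 ≤ L → V (l+1) = U l) ∧
      (∀ l, 1 ≤ l → l ≤ L → ∀ t : ℕ,
        ∃ Wtil : Matrix (Fin (2*r)) (Fin (2*r)) ℝ,
          W t l = U l * blockDiag r m Wtil (ρ t l • 1) * (V l)ᵀ ∧
          (t = 0 → Wtil = ε l • 1)) := by
  classical
  -- rank bound for the twisted kernel matrix
  have hGrank : (Φᵀ * chain (W 0) 1 L).rank ≤ r := by
    calc (Φᵀ * chain (W 0) 1 L).rank ≤ Φᵀ.rank := Matrix.rank_mul_le_left _ _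
    _ = Φ.rank := Matrix.rank_transpose Φ
    _ ≤ r := hΦ
  obtain ⟨V₁, hV₁o1, hV₁o2, hN1, hN2⟩ := exists_V1' r m Φ (Φᵀ * chain (W 0) 1 L) hΦ hGrank
  set c : ℕ → ℝ := fun l => ∏ k ∈ Finset.Icc 1 l, ε k with hc
  have hcpos : ∀ l, l ≤ L → 0 < c l := by
    intro l hl
    refine Finset.prod_pos ?_
    intro k hk
    obtain ⟨hk1, hk2⟩ := Finset.mem_Icc.mp hk
    exact hε k hk1 (le_trans hk2 hl)
  set P : ℕ → Matrix (Fin (2*r+m)) (Fin (2*r+m)) ℝ := fun l => chain (W 0) 1 l with hP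
  set U : ℕ → Matrix (Fin (2*r+m)) (Fin (2*r+m)) ℝ := fun l => (c l)⁻¹ • (P l * V₁) with hU
  have hP0 : P 0 = 1 := chain_empty _ (by omega)
  have hPsucc : ∀ l, P (l+1) = W 0 (l+1) * P l := fun l => chain_succ _ (by omega)
  have hc0 : c 0 = 1 := by simp [hc]
  have hcsucc : ∀ l, c (l+1) = c l * ε (l+1) := by
    intro l
    simp only [hc]
    rw [Finset.prod_Icc_succ_top (by omega : 1 ≤ l + 1)]
  have hU0 : U 0 = V₁ := by simp [hU, hP0, hc0]
  -- orthogonality of the (scaled) initial chain products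
  have hPP : ∀ l, l ≤ L → (P l)ᵀ * P l = ((c l)^2) • 1 ∧ P l * (P l)ᵀ = ((c l)^2) • 1 := by
    intro l
    induction l with
    | zero => intro _; simp [hP0, hc0]
    | succ n ihn =>
      intro hn
      obtain ⟨ih1, ih2⟩ := ihn (by omega)
      obtain ⟨hw1, hw2⟩ := hW0 (n+1) (by omega) hn
      constructor
      · rw [hPsucc n, Matrix.transpose_mul]
        calc (P n)ᵀ * (W 0 (n+1))ᵀ * (W 0 (n+1) * P n)
            = (P n)ᵀ * ((W 0 (n+1))ᵀ * W 0 (n+1)) * P n := by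
              simp only [Matrix.mul_assoc]
          _ = (P n)ᵀ * ((ε (n+1))^2 • 1) * P n := by rw [hw2]
          _ = (ε (n+1))^2 • ((P n)ᵀ * P n) := by
              rw [Matrix.mul_smul, Matrix.mul_one, Matrix.smul_mul]
          _ = ((c (n+1))^2) • 1 := by
              rw [ih1, smul_smul, hcsucc n]; ring_nf
      · rw [hPsucc n, Matrix.transpose_mul]
        calc W 0 (n+1) * P n * ((P n)ᵀ * (W 0 (n+1))ᵀ)
            = W 0 (n+1) * (P n * (P n)ᵀ) * (W 0 (n+1))ᵀ := by
              simp only [Matrix.mul_assoc]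
          _ = W 0 (n+1) * ((c n)^2 • 1) * (W 0 (n+1))ᵀ := by rw [ih2]
          _ = (c n)^2 • (W 0 (n+1) * (W 0 (n+1))ᵀ) := by
              rw [Matrix.mul_smul, Matrix.mul_one, Matrix.smul_mul]
          _ = ((c (n+1))^2) • 1 := by
              rw [hw1, smul_smul, hcsucc n]; ring_nf
  -- orthogonality of the U matrices
  have hUorth : ∀ l, l ≤ L → (U l)ᵀ * U l = 1 ∧ U l * (U l)ᵀ = 1 := by
    intro l hl
    obtain ⟨h1, h2⟩ := hPP l hl
    have hcl := hcpos l hl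
    constructor
    · rw [hU]
      simp only [Matrix.transpose_smul, Matrix.transpose_mul, Matrix.smul_mul, Matrix.mul_smul,
        smul_smul]
      calc ((c l)⁻¹ * (c l)⁻¹) • (V₁ᵀ * (P l)ᵀ * (P l * V₁))
          = ((c l)⁻¹ * (c l)⁻¹) • (V₁ᵀ * ((P l)ᵀ * P l) * V₁) := by
            simp only [Matrix.mul_assoc]
        _ = ((c l)⁻¹ * (c l)⁻¹ * (c l)^2) • (V₁ᵀ * V₁) := by
            rw [h1, Matrix.mul_smul, Matrix.mul_one, Matrix.smul_mul, smul_smul]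
        _ = 1 := by
            rw [hV₁o1]
            rw [show (c l)⁻¹ * (c l)⁻¹ * (c l)^2 = 1 by field_simp]
            simp
    · rw [hU]
      simp only [Matrix.transpose_smul, Matrix.transpose_mul, Matrix.smul_mul, Matrix.mul_smul,
        smul_smul]
      calc ((c l)⁻¹ * (c l)⁻¹) • (P l * V₁ * (V₁ᵀ * (P l)ᵀ))
          = ((c l)⁻¹ * (c l)⁻¹) • (P l * (V₁ * V₁ᵀ) * (P l)ᵀ) := by
            simp only [Matrix.mul_assoc]
        _ = ((c l)⁻¹ * (c l)⁻¹) • (P l * (P l)ᵀ) := by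
            rw [hV₁o2, Matrix.mul_one]
        _ = 1 := by
            rw [h2, smul_smul]
            rw [show (c l)⁻¹ * (c l)⁻¹ * (c l)^2 = 1 by field_simp]
            simp
  -- initialization in the rotated frame
  have hW0UV : ∀ l, 1 ≤ l → l ≤ L → W 0 l = ε l • (U l * (U (l-1))ᵀ) := by
    intro l hl1 hl2
    obtain ⟨n, rfl⟩ : ∃ n, l = n + 1 := ⟨l - 1, by omega⟩
    have hPn := (hPP n (by omega)).2
    have hcn := hcpos n (by omega)
    have hcl := hcpos (n+1) (by omega)
    have hεl := hε (n+1) (by omega) hl2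
    show W 0 (n+1) = ε (n+1) • (U (n+1) * (U n)ᵀ)
    rw [hU]
    simp only [Matrix.transpose_smul, Matrix.transpose_mul, Matrix.smul_mul, Matrix.mul_smul,
      smul_smul]
    calc W 0 (n+1)
        = (ε (n+1) * ((c (n+1))⁻¹ * (c n)⁻¹) * (c n)^2) • W 0 (n+1) := by
          rw [show ε (n+1) * ((c (n+1))⁻¹ * (c n)⁻¹) * (c n)^2 = 1 by
            rw [hcsucc n]; field_simp]
          rw [one_smul]
      _ = (ε (n+1) * ((c (n+1))⁻¹ * (c n)⁻¹)) • (W 0 (n+1) * ((c n)^2 • 1)) := by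
          rw [Matrix.mul_smul, Matrix.mul_one, smul_smul]
      _ = (ε (n+1) * ((c (n+1))⁻¹ * (c n)⁻¹)) • (W 0 (n+1) * (P n * (P n)ᵀ)) := by rw [hPn]
      _ = (ε (n+1) * ((c (n+1))⁻¹ * (c n)⁻¹)) • (P (n+1) * V₁ * (V₁ᵀ * (P n)ᵀ)) := by
          rw [hPsucc n]
          congr 1
          calc W 0 (n+1) * (P n * (P n)ᵀ)
              = W 0 (n+1) * P n * (P n)ᵀ := by rw [Matrix.mul_assoc]
            _ = W 0 (n+1) * P n * (V₁ * V₁ᵀ) * (P n)ᵀ := by rw [hV₁o2, Matrix.mul_one]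
            _ = W 0 (n+1) * P n * V₁ * (V₁ᵀ * (P n)ᵀ) := by simp only [Matrix.mul_assoc]
      _ = (ε (n+1) * ((c n)⁻¹ * (c (n+1))⁻¹)) • (P (n+1) * V₁ * (V₁ᵀ * (P n)ᵀ)) := by
          congr 1
          ring
    done
  -- Φ in the rotated frame
  have hUL1 : (U L)ᵀ * U L = 1 := (hUorth L le_rfl).1
  have hUL2 : U L * (U L)ᵀ = 1 := (hUorth L le_rfl).2
  have hU01 : (U 0)ᵀ * U 0 = 1 := (hUorth 0 (by omega)).1
  have hU02 : U 0 * (U 0)ᵀ = 1 := (hUorth 0 (by omega)).2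
  obtain ⟨Φt, hΦt⟩ : ∃ Φt, (U L)ᵀ * Φ * U 0 = blockDiag r m Φt 0 := by
    apply eq_blockDiag_of
    · intro a j
      have hz : cols2 r m ((U L)ᵀ * Φ * U 0) = 0 := by
        rw [hU0, cols2_mul, Matrix.mul_assoc, hN1, Matrix.mul_zero]
      have h := congrFun (congrFun hz a) j
      simpa [cols2] using h
    · intro i b
      have hTz : cols2 r m (((U L)ᵀ * Φ * U 0)ᵀ) = 0 := by
        rw [hU0, Matrix.transpose_mul, Matrix.transpose_mul, Matrix.transpose_transpose]
        rw [cols2_mul, cols2_mul]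
        rw [show cols2 r m (U L) = (c L)⁻¹ • (P L * cols2 r m V₁) by
          rw [hU]; rw [cols2_smul, cols2_mul]]
        rw [Matrix.mul_smul, Matrix.mul_smul]
        rw [← Matrix.mul_assoc Φᵀ (P L) (cols2 r m V₁), hN2, Matrix.mul_zero, smul_zero]
      have h := congrFun (congrFun hTz b) i
      simpa [cols2, Matrix.transpose_apply] using h
  have hΦdec : Φ = U L * blockDiag r m Φt 0 * (U 0)ᵀ := by
    rw [← hΦt]
    calc Φ = (U L * (U L)ᵀ) * Φ * (U 0 * (U 0)ᵀ) := by
          rw [hUL2, hU02, Matrix.one_mul, Matrix.mul_one]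
      _ = U L * ((U L)ᵀ * Φ * U 0) * (U 0)ᵀ := by simp only [Matrix.mul_assoc]
  -- the main induction over time
  have main : ∀ t, ∀ l, 1 ≤ l → l ≤ L →
      ∃ A, W t l = U l * blockDiag r m A (ρ t l • 1) * (U (l-1))ᵀ ∧ (t = 0 → A = ε l • 1) := by
    intro t
    induction t with
    | zero =>
      intro l hl1 hl2
      refine ⟨ε l • 1, ?_, fun _ => rfl⟩
      rw [hρ0 l, ← _root_.blockDiag_smul, _root_.blockDiag_one]
      rw [Matrix.mul_smul, Matrix.mul_one, Matrix.smul_mul]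
      exact hW0UV l hl1 hl2
    | succ t ih =>
      have chainlem : ∀ j, j ≤ L → ∀ i, 1 ≤ i → i ≤ j + 1 →
          ∃ B, chain (W t) i j
            = U j * blockDiag r m B ((∏ k ∈ Finset.Icc i j, ρ t k) • 1) * (U (i-1))ᵀ := by
        intro j
        induction j with
        | zero =>
          intro _ i hi1 hi2
          have hi : i = 1 := by omega
          subst hi
          refine ⟨1, ?_⟩
          rw [chain_empty _ (by omega)]
          rw [show Finset.Icc 1 0 = ∅ from Finset.Icc_eq_empty (by omega)]
          rw [Finset.prod_empty, one_smul, _root_.blockDiag_one, Matrix.mul_one]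
          exact ((hUorth 0 (by omega)).2).symm
        | succ n ihn =>
          intro hn i hi1 hi2
          by_cases hin : i = n + 2
          · subst hin
            refine ⟨1, ?_⟩
            rw [chain_empty _ (by omega)]
            rw [show Finset.Icc (n+2) (n+1) = ∅ from Finset.Icc_eq_empty (by omega)]
            rw [Finset.prod_empty, one_smul, _root_.blockDiag_one, Matrix.mul_one]
            rw [show n + 2 - 1 = n + 1 by omega]
            exact ((hUorth (n+1) hn).2).symm
          · obtain ⟨B, hB⟩ := ihn (by omega) i hi1 (by omega)
            obtain ⟨A, hA, _⟩ := ih (n+1) (by omega) hn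
            refine ⟨A * B, ?_⟩
            rw [chain_succ _ (by omega), hA, hB]
            simp only [Nat.add_sub_cancel]
            rw [glue (hUorth n (by omega)).1]
            rw [blockDiag_mul_smul]
            rw [show ρ t (n+1) * ∏ k ∈ Finset.Icc i n, ρ t k
                = ∏ k ∈ Finset.Icc i (n+1), ρ t k from by
              rw [Finset.prod_Icc_succ_top (by omega : i ≤ n+1)]; ring]
      intro l hl1 hl2
      obtain ⟨A, hA, _⟩ := ih l hl1 hl2
      obtain ⟨B₂, hB₂⟩ := chainlem L le_rfl (l+1) (by omega) (by omega)
      obtain ⟨B₃, hB₃⟩ := chainlem L le_rfl 1 (by omega) (by omega)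
      obtain ⟨B₁, hB₁⟩ := chainlem (l-1) (by omega) 1 (by omega) (by omega)
      -- scalar bookkeeping
      have hl_mem : l ∈ Finset.Icc 1 L := Finset.mem_Icc.mpr ⟨hl1, hl2⟩
      have hsplit : (Finset.Icc 1 L).erase l = Finset.Icc 1 (l-1) ∪ Finset.Icc (l+1) L := by
        ext x
        simp only [Finset.mem_erase, Finset.mem_Icc, Finset.mem_union]
        omega
      have hdisj : Disjoint (Finset.Icc 1 (l-1)) (Finset.Icc (l+1) L) := by
        rw [Finset.disjoint_left]
        intro x hx1 hx2
        simp only [Finset.mem_Icc] at hx1 hx2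
        omega
      have herase : ∏ k ∈ (Finset.Icc 1 L).erase l, ρ t k
          = (∏ k ∈ Finset.Icc 1 (l-1), ρ t k) * ∏ k ∈ Finset.Icc (l+1) L, ρ t k := by
        rw [hsplit, Finset.prod_union hdisj]
      have hfull : ∏ k ∈ Finset.Icc 1 L, ρ t k
          = ρ t l * ((∏ k ∈ Finset.Icc 1 (l-1), ρ t k) * ∏ k ∈ Finset.Icc (l+1) L, ρ t k) := by
        rw [← Finset.mul_prod_erase _ _ hl_mem, herase]
      have hsq : ∏ k ∈ (Finset.Icc 1 L).erase l, (ρ t k)^2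
          = ((∏ k ∈ Finset.Icc 1 (l-1), ρ t k) * ∏ k ∈ Finset.Icc (l+1) L, ρ t k)^2 := by
        rw [Finset.prod_pow, herase]
      have hsc : (1 - η*lam) * ρ t l
          - η * ((∏ k ∈ Finset.Icc (l+1) L, ρ t k)
              * ((∏ k ∈ Finset.Icc 1 L, ρ t k) * ∏ k ∈ Finset.Icc 1 (l-1), ρ t k))
          = ρ (t+1) l := by
        rw [hρ t l, hsq, hfull]; ring
      -- the gradient term in the rotated frame
      have hT : (chain (W t) (l+1) L)ᵀ * (chain (W t) 1 L - Φ) * (chain (W t) 1 (l-1))ᵀ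
          = U l * blockDiag r m (B₂ᵀ * ((B₃ - Φt) * B₁ᵀ))
              (((∏ k ∈ Finset.Icc (l+1) L, ρ t k)
                * ((∏ k ∈ Finset.Icc 1 L, ρ t k) * ∏ k ∈ Finset.Icc 1 (l-1), ρ t k)) • 1)
              * (U (l-1))ᵀ := by
        rw [hB₁, hB₂, hB₃, hΦdec]
        simp only [Nat.add_sub_cancel, Nat.sub_self]
        rw [show U L * blockDiag r m B₃ ((∏ k ∈ Finset.Icc 1 L, ρ t k) • 1) * (U 0)ᵀ
              - U L * blockDiag r m Φt 0 * (U 0)ᵀ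
            = U L * blockDiag r m (B₃ - Φt) ((∏ k ∈ Finset.Icc 1 L, ρ t k) • 1) * (U 0)ᵀ by
          rw [← Matrix.sub_mul, ← Matrix.mul_sub, _root_.blockDiag_sub, sub_zero]]
        simp only [Matrix.transpose_mul, Matrix.transpose_transpose, _root_.blockDiag_transpose,
          Matrix.transpose_smul, Matrix.transpose_one]
        simp only [Matrix.mul_assoc]
        rw [cancel_left hUL1, cancel_left hU01]
        rw [← Matrix.mul_assoc (_root_.blockDiag r m (B₃ - Φt) _)
          (_root_.blockDiag r m B₁ᵀ _) ((U (l-1))ᵀ)]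
        rw [blockDiag_mul_smul]
        rw [← Matrix.mul_assoc (_root_.blockDiag r m B₂ᵀ _) _ ((U (l-1))ᵀ)]
        rw [blockDiag_mul_smul]
      refine ⟨(1 - η*lam) • A - η • (B₂ᵀ * ((B₃ - Φt) * B₁ᵀ)), ?_, by simp⟩
      rw [hWupd t l hl1 hl2, hA, hT]
      rw [combine_smul_sub]
      rw [_root_.blockDiag_smul, _root_.blockDiag_smul, _root_.blockDiag_sub]
      rw [smul_smul, smul_smul, ← sub_smul, hsc]
  -- conclude
  refine ⟨U, fun l => U (l-1), ?_, ?_, ?_⟩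
  · intro l hl1 hl2
    exact ⟨hUorth l hl2, hUorth (l-1) (by omega)⟩
  · intro l hl1 hl2
    show U (l+1-1) = U l
    rw [Nat.add_sub_cancel]
  · intro l hl1 hl2 t
    obtain ⟨A, hA, h0⟩ := main t l hl1 hl2
    exact ⟨A, hA, h0⟩
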